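/- Let q be a prime power and n ≥ 2. An element α of F_{q^n} is normal over F_q (i.e., {α, α^q, ..., α^{q^{n-1}}} is an F_q-basis of F_{q^n}) if and only if the polynomials g_α(x) = Σ_{i=0}^{n-1} α^{q^i} x^{n-1-i} and x^n - 1 are relatively prime in F_{q^n}[x]. -/

import Mathlib

open Polynomial

open Finset
set_option linter.unusedSectionVars false
set_option maxHeartbeats 800000

section Aux

variable {F E : Type*} [Field F] [Fintype F] [Field E] [Fintype E] [Algebra F E]
variable {q n : ℕ}

lemma aux_card (hq : q = Fintype.card F) (hn : n = Module.finrank F E) :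
    Fintype.card E = q ^ n := by
  rw [hq, hn]; exact Module.card_eq_pow_finrank

lemma aux_pow_qn (hq : q = Fintype.card F) (hn : n = Module.finrank F E) (x : E) :
    x ^ q ^ n = x := by
  rw [← aux_card hq hn]; exact FiniteField.pow_card x

lemma aux_pow_add_n (hq : q = Fintype.card F) (hn : n = Module.finrank F E) (α : E) (x : ℕ) :
    α ^ q ^ (x + n) = α ^ q ^ x := by
  rw [pow_add, pow_mul, aux_pow_qn hq hn]

lemma aux_dvd_pow_mod (n e : ℕ) : ((X : E[X]) ^ n - 1) ∣ X ^ e - X ^ (e % n) := by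
  have h1 : (X : E[X]) ^ e - X ^ (e % n) = X ^ (e % n) * ((X ^ n) ^ (e / n) - 1) := by
    rw [mul_sub, mul_one, ← pow_mul, ← pow_add, Nat.mod_add_div]
  rw [h1]
  exact Dvd.dvd.mul_left (by simpa using sub_dvd_pow_sub_pow ((X : E[X]) ^ n) 1 (e / n)) _

lemma aux_coeff_sum (n : ℕ) (c : ℕ → E) {m : ℕ} (hm : m < n) :
    (∑ k ∈ range n, C (c k) * X ^ k).coeff m = c m := by
  rw [finset_sum_coeff]
  rw [Finset.sum_eq_single m]
  · simp
  · intro k _ hk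
    simp [coeff_C_mul, coeff_X_pow, Ne.symm hk]
  · intro hmem
    exact absurd (Finset.mem_range.mpr hm) hmem

lemma aux_degree_sum_lt (n : ℕ) (c : ℕ → E) :
    (∑ k ∈ range n, C (c k) * X ^ k).degree < (n : WithBot ℕ) := by
  apply lt_of_le_of_lt (degree_sum_le _ _)
  rw [Finset.sup_lt_iff (by exact_mod_cast WithBot.bot_lt_coe n)]
  intro m hm
  exact lt_of_le_of_lt (degree_C_mul_X_pow_le _ _) (by exact_mod_cast Finset.mem_range.mp hm)

lemma aux_dvd_small (hn0 : 0 < n) (c : ℕ → E) :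
    ((X : E[X]) ^ n - 1) ∣ (∑ m ∈ range n, C (c m) * X ^ m) ↔ ∀ m ∈ range n, c m = 0 := by
  constructor
  · intro hdvd m hm
    have hdeg : ((X : E[X]) ^ n - 1).degree = n := by
      simpa using degree_X_pow_sub_C hn0 (1 : E)
    have h0 : (∑ m ∈ range n, C (c m) * X ^ m) = 0 :=
      eq_zero_of_dvd_of_degree_lt hdvd (by rw [hdeg]; exact aux_degree_sum_lt n c)
    have h1 := aux_coeff_sum n c (mem_range.mp hm)
    rw [h0, coeff_zero] at h1
    exact h1.symm
  · intro h0
    have h1 : (∑ m ∈ range n, C (c m) * X ^ m) = 0 :=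
      Finset.sum_eq_zero fun m hm => by rw [h0 m hm]; simp
    rw [h1]
    exact dvd_zero _

lemma aux_key (hq : q = Fintype.card F) (hn : n = Module.finrank F E) (hn0 : 0 < n)
    (α : E) (d : ℕ → E) :
    ((X : E[X]) ^ n - 1) ∣ (∑ i ∈ range n, C (d i) * X ^ i) *
        (∑ i ∈ range n, C (α ^ q ^ i) * X ^ (n - 1 - i)) ↔
      ∀ m ∈ range n, ∑ i ∈ range n, d i * α ^ q ^ (i + m) = 0 := by
  set a : ℕ → E := fun k => α ^ q ^ (n - 1 - k) with ha
  have hg : (∑ i ∈ range n, C (α ^ q ^ i) * X ^ (n - 1 - i))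
      = ∑ k ∈ range n, C (a k) * X ^ k := by
    refine Finset.sum_nbij' (fun i => n - 1 - i) (fun k => n - 1 - k)
      (fun i hi => ?_) (fun k hk => ?_) (fun i hi => ?_) (fun k hk => ?_) (fun i hi => ?_)
    · simp only [mem_range] at *; omega
    · simp only [mem_range] at *; omega
    · simp only [mem_range] at hi
      show n - 1 - (n - 1 - i) = i
      omega
    · simp only [mem_range] at hk
      show n - 1 - (n - 1 - k) = k
      omega
    · simp only [mem_range] at hi
      have h2 : n - 1 - (n - 1 - i) = i := by omega
      simp only [ha, h2]
  have hprod : (∑ i ∈ range n, C (d i) * X ^ i) * (∑ k ∈ range n, C (a k) * X ^ k)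
      = ∑ i ∈ range n, ∑ k ∈ range n, C (d i * a k) * X ^ (i + k) := by
    rw [Finset.sum_mul_sum]
    refine Finset.sum_congr rfl fun i _ => Finset.sum_congr rfl fun k _ => ?_
    rw [C_mul, pow_add]; ring
  have hfold : ∀ P Q : E[X], ((X : E[X]) ^ n - 1) ∣ P - Q →
      (((X : E[X]) ^ n - 1) ∣ P ↔ ((X : E[X]) ^ n - 1) ∣ Q) := by
    intro P Q hPQ
    constructor
    · intro hP; simpa using hP.sub hPQ
    · intro hQ; simpa using hPQ.add hQ
  have hsub : ((X : E[X]) ^ n - 1) ∣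
      (∑ i ∈ range n, ∑ k ∈ range n, C (d i * a k) * X ^ (i + k)) -
      (∑ i ∈ range n, ∑ k ∈ range n, C (d i * a k) * X ^ ((i + k) % n)) := by
    rw [← Finset.sum_sub_distrib]
    refine Finset.dvd_sum fun i _ => ?_
    rw [← Finset.sum_sub_distrib]
    refine Finset.dvd_sum fun k _ => ?_
    rw [← mul_sub]
    exact (aux_dvd_pow_mod n (i + k)).mul_left _
  have hinner : ∀ i ∈ range n,
      (∑ k ∈ range n, C (d i * a k) * X ^ ((i + k) % n))
      = ∑ m ∈ range n, C (d i * a ((m + (n - i)) % n)) * X ^ m := by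
    intro i hi
    rw [mem_range] at hi
    refine Finset.sum_nbij' (fun k => (i + k) % n) (fun m => (m + (n - i)) % n)
      (fun k _ => mem_range.mpr (Nat.mod_lt _ hn0))
      (fun m _ => mem_range.mpr (Nat.mod_lt _ hn0))
      (fun k hk => ?_) (fun m hm => ?_) (fun k hk => ?_)
    · rw [mem_range] at hk
      show ((i + k) % n + (n - i)) % n = k
      rw [Nat.mod_add_mod]
      have h3 : i + k + (n - i) = k + n := by omega
      rw [h3, Nat.add_mod_right, Nat.mod_eq_of_lt hk]
    · rw [mem_range] at hm
      show (i + (m + (n - i)) % n) % n = m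
      rw [Nat.add_mod_mod]
      have h3 : i + (m + (n - i)) = m + n := by omega
      rw [h3, Nat.add_mod_right, Nat.mod_eq_of_lt hm]
    · rw [mem_range] at hk
      have h4 : ((i + k) % n + (n - i)) % n = k := by
        rw [Nat.mod_add_mod]
        have h3 : i + k + (n - i) = k + n := by omega
        rw [h3, Nat.add_mod_right, Nat.mod_eq_of_lt hk]
      show C (d i * a k) * X ^ ((i + k) % n)
          = C (d i * a (((i + k) % n + (n - i)) % n)) * X ^ ((i + k) % n)
      rw [h4]
  have hr : (∑ i ∈ range n, ∑ k ∈ range n, C (d i * a k) * X ^ ((i + k) % n))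
      = ∑ m ∈ range n, C (∑ i ∈ range n, d i * a ((m + (n - i)) % n)) * X ^ m := by
    rw [Finset.sum_congr rfl hinner, Finset.sum_comm]
    refine Finset.sum_congr rfl fun m _ => ?_
    rw [map_sum, Finset.sum_mul]
  have hc : ∀ m ∈ range n, ∀ i ∈ range n,
      d i * a ((m + (n - i)) % n) = d i * α ^ q ^ (i + (n - 1 - m)) := by
    intro m hm i hi
    rw [mem_range] at hm hi
    congr 1
    rcases le_or_gt i m with hle | hlt
    · have h2 : (m + (n - i)) % n = m - i := by
        have h3 : m + (n - i) = (m - i) + n := by omega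
        rw [h3, Nat.add_mod_right, Nat.mod_eq_of_lt (by omega)]
      have h5 : n - 1 - (m - i) = i + (n - 1 - m) := by omega
      simp only [ha, h2, h5]
    · have h2 : (m + (n - i)) % n = m + (n - i) := Nat.mod_eq_of_lt (by omega)
      have h3 : i + (n - 1 - m) = (n - 1 - (m + (n - i))) + n := by omega
      simp only [ha, h2, h3]
      rw [aux_pow_add_n hq hn]
  rw [hg, hprod, hfold _ _ hsub, hr, aux_dvd_small hn0]
  have hS : ∀ m ∈ range n, (∑ i ∈ range n, d i * a ((m + (n - i)) % n))
      = ∑ i ∈ range n, d i * α ^ q ^ (i + (n - 1 - m)) :=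
    fun m hm => Finset.sum_congr rfl fun i hi => hc m hm i hi
  constructor
  · intro h0 m hm
    rw [mem_range] at hm
    have h1 := h0 (n - 1 - m) (mem_range.mpr (by omega))
    rw [hS _ (mem_range.mpr (by omega))] at h1
    have h2 : n - 1 - (n - 1 - m) = m := by omega
    rw [h2] at h1
    exact h1
  · intro h0 m hm
    rw [mem_range] at hm
    rw [hS _ (mem_range.mpr hm)]
    exact h0 (n - 1 - m) (mem_range.mpr (by omega))

end Aux


/-- An element `α` of `F_{q^n}` is normal over `F_q` iff
`g_α(x) = Σ_{i<n} α^{q^i} x^{n-1-i}` and `x^n - 1` are coprime in `F_{q^n}[x]`. -/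
theorem stmt_16 (F E : Type*) [Field F] [Fintype F] [Field E] [Fintype E] [Algebra F E]
    (q n : ℕ) (hq : q = Fintype.card F) (hn : n = Module.finrank F E) (hn2 : 2 ≤ n)
    (α : E) :
    (∃ b : Module.Basis (Fin n) F E, ∀ i : Fin n, b i = α ^ q ^ (i : ℕ)) ↔
      IsCoprime (∑ i ∈ Finset.range n, C (α ^ q ^ i) * X ^ (n - 1 - i))
        ((X : Polynomial E) ^ n - 1) := by
  have hn0 : 0 < n := by omega
  have hq1 : 1 < q := by rw [hq]; exact Fintype.one_lt_card
  obtain ⟨p, _instF⟩ := CharP.exists F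
  haveI := _instF
  obtain ⟨e, hpp, hqe⟩ := FiniteField.card F p
  haveI : Fact p.Prime := ⟨hpp⟩
  haveI : CharP E p := charP_of_injective_algebraMap (algebraMap F E).injective p
  have hqe' : q = p ^ (e : ℕ) := by rw [hq, hqe]
  set gp : E[X] := ∑ i ∈ Finset.range n, C (α ^ q ^ i) * X ^ (n - 1 - i) with hgp
  constructor
  · -- normal basis → coprime
    rintro ⟨b, hb⟩
    -- the Frobenius as an F-linear map
    set ψ : E →ₗ[F] E :=
      { toFun := fun x => x ^ q
        map_add' := by
          intro x y
          simp only [hqe']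
          exact add_pow_char_pow _ _ _ _
        map_smul' := by
          intro c x
          simp only [RingHom.id_apply]
          rw [Algebra.smul_def, Algebra.smul_def, mul_pow, ← map_pow, hq,
            FiniteField.pow_card] } with hψdef
    have hψ1 : ∀ x : E, ψ x = x ^ q := fun _ => rfl
    have hψ : ∀ (i : ℕ) (x : E), (ψ ^ i) x = x ^ q ^ i := by
      intro i
      induction i with
      | zero => intro x; simp
      | succ i ih =>
        intro x
        rw [pow_succ, Module.End.mul_apply, hψ1, ih, ← pow_mul, ← pow_succ']
    -- distinctness of the power maps
    have hkey : ∀ i j : ℕ, i < j → j < n →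
        (powMonoidHom (q ^ i) : E →* E) ≠ powMonoidHom (q ^ j) := by
      intro i j hij hj heq
      have hfn : ∀ x : E, x ^ q ^ i = x ^ q ^ j := fun x => by
        have := congrArg (fun f : E →* E => f x) heq
        simpa [powMonoidHom] using this
      have hqlt : q ^ i < q ^ j := Nat.pow_lt_pow_right hq1 hij
      have heval : ∀ x : E, ((X : E[X]) ^ q ^ j - X ^ q ^ i).eval x = 0 := by
        intro x
        simp [hfn x]
      have hdegle : ((X : E[X]) ^ q ^ j - X ^ q ^ i).natDegree ≤ q ^ j := by
        refine le_trans (natDegree_sub_le _ _) ?_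
        simp [natDegree_X_pow, le_of_lt hqlt]
      have hcard : ((X : E[X]) ^ q ^ j - X ^ q ^ i).natDegree < Fintype.card E := by
        rw [aux_card hq hn]
        exact lt_of_le_of_lt hdegle (Nat.pow_lt_pow_right hq1 hj)
      have hP : ((X : E[X]) ^ q ^ j - X ^ q ^ i) = 0 :=
        Polynomial.eq_zero_of_natDegree_lt_card_of_eval_eq_zero _ Function.injective_id
          (fun x => heval x) hcard
      have hco := congrArg (fun P : E[X] => P.coeff (q ^ j)) hP
      simp [coeff_X_pow, hqlt.ne'] at hco
    have hinj : Function.Injective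
        (fun i : Fin n => (powMonoidHom (q ^ (i : ℕ)) : E →* E)) := by
      intro i j hij
      rcases lt_trichotomy (i : ℕ) (j : ℕ) with hlt | heq | hgt
      · exact absurd hij (hkey _ _ hlt j.isLt)
      · exact Fin.ext heq
      · exact absurd hij.symm (hkey _ _ hgt i.isLt)
    have hli : LinearIndependent E
        ((fun f : E →* E => (f : E → E)) ∘ fun i : Fin n => powMonoidHom (q ^ (i : ℕ))) :=
      (linearIndependent_monoidHom E E).comp _ hinj
    -- work in the quotient ring
    set h : E[X] := X ^ n - 1 with hh
    have hmonic : h.Monic := by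
      have := monic_X_pow_sub_C (1 : E) (show n ≠ 0 by omega)
      simpa using this
    have hne : h ≠ 0 := hmonic.ne_zero
    have hdegh : h.natDegree = n := by
      have : ((X : E[X]) ^ n - C 1).natDegree = n := natDegree_X_pow_sub_C
      simpa using this
    have hone : h ≠ 1 := by
      intro h1
      rw [h1] at hdegh
      simp at hdegh
      omega
    haveI : Module.Finite E (AdjoinRoot h) := (AdjoinRoot.powerBasis hne).finite
    have hker : ∀ x : AdjoinRoot h, x * AdjoinRoot.mk h gp = 0 → x = 0 := by
      intro x hx0
      obtain ⟨D0, rfl⟩ := AdjoinRoot.mk_surjective x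
      set D : E[X] := D0 %ₘ h with hD
      have hmk : AdjoinRoot.mk h D = AdjoinRoot.mk h D0 := by
        have h1 : D0 %ₘ h + h * (D0 /ₘ h) = D0 := modByMonic_add_div D0 h
        calc AdjoinRoot.mk h D = AdjoinRoot.mk h (D0 %ₘ h + h * (D0 /ₘ h)) := by
              rw [map_add, map_mul, AdjoinRoot.mk_self, zero_mul, add_zero]
          _ = _ := by rw [h1]
      have hdeg : D.natDegree < n := by
        have := natDegree_modByMonic_lt D0 hmonic hone
        rwa [hdegh] at this
      have hdvd : h ∣ D * gp := by
        have h2 : AdjoinRoot.mk h (D * gp) = 0 := by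
          rw [map_mul, hmk]
          exact hx0
        exact AdjoinRoot.mk_eq_zero.mp h2
      have hthis : D = ∑ i ∈ Finset.range n, C (D.coeff i) * X ^ i := by
        have h3 := D.as_sum_range' n hdeg
        simpa only [← C_mul_X_pow_eq_monomial] using h3
      have hdvd' : h ∣ (∑ i ∈ Finset.range n, C (D.coeff i) * X ^ i) * gp := by
        rw [← hthis]; exact hdvd
      have hS := (aux_key hq hn hn0 α D.coeff).mp hdvd'
      -- build linear map
      set L : E →ₗ[F] E := ∑ i ∈ Finset.range n, D.coeff i • (ψ ^ i) with hL
      have hLb : ∀ j : Fin n, L (b j) = 0 := by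
        intro j
        rw [hb j]
        have h4 : L (α ^ q ^ (j : ℕ)) =
            ∑ i ∈ Finset.range n, D.coeff i * α ^ q ^ (i + (j : ℕ)) := by
          rw [hL, LinearMap.sum_apply]
          refine Finset.sum_congr rfl fun i _ => ?_
          rw [LinearMap.smul_apply, hψ, smul_eq_mul, ← pow_mul, ← pow_add,
            Nat.add_comm (j : ℕ) i]
        rw [h4]
        exact hS (j : ℕ) (Finset.mem_range.mpr j.isLt)
      have hL0 : L = 0 := b.ext fun j => by rw [hLb j]; simp
      have hLx : ∀ x : E, ∑ i ∈ Finset.range n, D.coeff i * x ^ q ^ i = 0 := by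
        intro x
        have h5 : L x = 0 := by rw [hL0]; simp
        rw [hL, LinearMap.sum_apply] at h5
        simpa [LinearMap.smul_apply, hψ, smul_eq_mul] using h5
      have hzero : ∀ i : Fin n, D.coeff (i : ℕ) = 0 := by
        refine Fintype.linearIndependent_iff.mp hli (fun i => D.coeff (i : ℕ)) ?_
        funext x
        simp only [Finset.sum_apply, Pi.smul_apply, Function.comp_apply, powMonoidHom_apply,
          smul_eq_mul, Pi.zero_apply]
        rw [← Finset.sum_range (fun i => D.coeff i * x ^ q ^ i)]
        exact hLx x
      have hD0 : D = 0 := by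
        rw [hthis]
        refine Finset.sum_eq_zero fun i hi => ?_
        rw [hzero ⟨i, Finset.mem_range.mp hi⟩]
        simp
      rw [← hmk, hD0, map_zero]
    have hinjmul : Function.Injective (LinearMap.mulRight E (AdjoinRoot.mk h gp)) := by
      intro x y hxy
      have h6 : (x - y) * AdjoinRoot.mk h gp = 0 := by
        rw [sub_mul]
        simp only [LinearMap.mulRight_apply] at hxy
        rw [hxy, sub_self]
      have := hker _ h6
      exact sub_eq_zero.mp this
    have hsurj := (LinearMap.injective_iff_surjective).mp hinjmul
    obtain ⟨u, hu⟩ := hsurj 1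
    obtain ⟨U, rfl⟩ := AdjoinRoot.mk_surjective u
    simp only [LinearMap.mulRight_apply] at hu
    have h7 : AdjoinRoot.mk h (U * gp - 1) = 0 := by
      rw [map_sub, map_mul, map_one, hu, sub_self]
    obtain ⟨V, hV⟩ := AdjoinRoot.mk_eq_zero.mp h7
    exact ⟨U, -V, by linear_combination hV⟩
  · -- coprime → normal basis
    intro hcop
    have hind : LinearIndependent F (fun i : Fin n => α ^ q ^ (i : ℕ)) := by
      rw [Fintype.linearIndependent_iff]
      intro c hc
      set d : ℕ → E := fun i => if h : i < n then algebraMap F E (c ⟨i, h⟩) else 0 with hd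
      have hS0 : ∑ i ∈ Finset.range n, d i * α ^ q ^ i = 0 := by
        rw [Finset.sum_range (fun i => d i * α ^ q ^ i)] at *
        rw [← hc]
        refine Finset.sum_congr rfl fun i _ => ?_
        rw [hd]
        simp only [i.isLt, dif_pos, Fin.eta]
        rw [Algebra.smul_def]
      have hdpow : ∀ (i : ℕ) (m : ℕ), d i ^ q ^ m = d i := by
        intro i m
        by_cases hi : i < n
        · rw [hd]
          simp only [hi, dif_pos]
          rw [← map_pow, hq, FiniteField.pow_card_pow]
        · rw [hd]
          simp only [hi, dif_neg]
          exact zero_pow (by positivity)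
      have hSm : ∀ m ∈ Finset.range n, ∑ i ∈ Finset.range n, d i * α ^ q ^ (i + m) = 0 := by
        intro m _
        have h8 : (∑ i ∈ Finset.range n, d i * α ^ q ^ i) ^ q ^ m = 0 := by
          rw [hS0]
          exact zero_pow (by positivity)
        have h9 : (∑ i ∈ Finset.range n, d i * α ^ q ^ i) ^ q ^ m
            = ∑ i ∈ Finset.range n, d i * α ^ q ^ (i + m) := by
          have hqm : q ^ m = p ^ ((e : ℕ) * m) := by rw [hqe', ← pow_mul]
          rw [hqm, sum_pow_char_pow]
          refine Finset.sum_congr rfl fun i _ => ?_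
          rw [mul_pow, ← hqm, hdpow, ← pow_mul, ← pow_add]
        rw [← h9, h8]
      have hdvd := (aux_key hq hn hn0 α d).mpr hSm
      have hdvdD : ((X : E[X]) ^ n - 1) ∣ ∑ i ∈ Finset.range n, C (d i) * X ^ i :=
        (hcop.symm).dvd_of_dvd_mul_right hdvd
      have hdegh : ((X : E[X]) ^ n - 1).degree = n := by
        simpa using degree_X_pow_sub_C hn0 (1 : E)
      have hD0 : (∑ i ∈ Finset.range n, C (d i) * X ^ i) = 0 :=
        eq_zero_of_dvd_of_degree_lt hdvdD (by rw [hdegh]; exact aux_degree_sum_lt n d)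
      intro i
      have h10 := aux_coeff_sum n d i.isLt
      rw [hD0, coeff_zero] at h10
      have h11 : algebraMap F E (c i) = 0 := by
        rw [hd] at h10
        simpa [i.isLt] using h10.symm
      exact (algebraMap F E).injective (by rw [h11, map_zero])
    haveI : NeZero n := ⟨by omega⟩
    have hcard : Fintype.card (Fin n) = Module.finrank F E := by
      rw [Fintype.card_fin]; exact hn
    refine ⟨basisOfLinearIndependentOfCardEqFinrank hind hcard, fun i => ?_⟩
    rw [coe_basisOfLinearIndependentOfCardEqFinrank]
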